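/- Let n₀, n_k ∈ ℕ⁺ with n_k ≥ n₀. Then for every v ∈ ℝ^{n₀}, (n_k/(2n₀))·‖v‖₂² ≤ ‖P^{n_k,n₀} v‖₂² ≤ (2n_k/n₀)·‖v‖₂². Equivalently, every eigenvalue of (P^{n_k,n₀})ᵀ P^{n_k,n₀} lies in the interval [n_k/(2n₀), 2n_k/n₀]. -/

import Mathlib

open MeasureTheory ProbabilityTheory Finset
open scoped ENNReal NNReal

noncomputable section

/-- Ceiling division of naturals: `cdiv a b = ⌈a / b⌉` whenever `b > 0`. -/
def cdiv (a b : ℕ) : ℕ := (a + b - 1) / b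

/-- The alignment operator `P^{n,m}`: for 1-based indices `I = i+1 ∈ [n]`, `J = j+1 ∈ [m]`,
the `(I,J)` entry is `1` if `⌈(J-1)n/m⌉ + 1 ≤ I ≤ ⌈Jn/m⌉` and `0` otherwise. -/
def alignP (n m : ℕ) : Matrix (Fin n) (Fin m) ℝ :=
  Matrix.of fun i j =>
    if cdiv (j.val * n) m < i.val + 1 ∧ i.val + 1 ≤ cdiv ((j.val + 1) * n) m then 1 else 0

/-- The averaging alignment operator `P̃^{n,m}` (for `n ≤ m`): the `(I,J)` entry is
`1/(⌈Im/n⌉ - ⌈(I-1)m/n⌉)` if `⌈(I-1)m/n⌉ + 1 ≤ J ≤ ⌈Im/n⌉` and `0` otherwise. -/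
def alignPt (n m : ℕ) : Matrix (Fin n) (Fin m) ℝ :=
  Matrix.of fun i j =>
    if cdiv (i.val * m) n < j.val + 1 ∧ j.val + 1 ≤ cdiv ((i.val + 1) * m) n
    then ((cdiv ((i.val + 1) * m) n : ℝ) - (cdiv (i.val * m) n : ℝ))⁻¹ else 0

/-- Squared `ℓ₂` norm of a vector. -/
def sqNorm {n : ℕ} (v : Fin n → ℝ) : ℝ := ∑ i, (v i) ^ 2

/-- `‖Dθ‖₁ = Σ_{i=1}^{n-1} |θ_i - θ_{i+1}|`. -/
def dNorm1 {n : ℕ} (θ : Fin n → ℝ) : ℝ :=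
  ∑ i : Fin (n - 1),
    |θ ⟨i.val, by have := i.isLt; omega⟩ - θ ⟨i.val + 1, by have := i.isLt; omega⟩|

/-- `‖Dθ‖₀`: the number of change points of `θ`. -/
def dNorm0 {n : ℕ} (θ : Fin n → ℝ) : ℕ :=
  (Finset.univ.filter fun i : Fin (n - 1) =>
    θ ⟨i.val, by have := i.isLt; omega⟩ ≠ θ ⟨i.val + 1, by have := i.isLt; omega⟩).card

/-- `Z` is a mean-zero `σ`-sub-Gaussian random variable: it is measurable, has zero mean,
and its Orlicz `ψ₂`-norm is at most `σ`, the latter being expressed by the (equivalent)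
condition that `E exp(Z²/t²) ≤ 2` for every `t > σ`. -/
def IsSubG {Ω : Type*} [MeasurableSpace Ω] (μ : Measure Ω) (σ : ℝ) (Z : Ω → ℝ) : Prop :=
  Measurable Z ∧ (∫ ω, Z ω ∂μ) = 0 ∧
    ∀ t : ℝ, σ < t →
      (∫⁻ ω, ENNReal.ofReal (Real.exp ((Z ω) ^ 2 / t ^ 2)) ∂μ) ≤ 2

/-- The set of (1-based) change-point locations `S = {t ∈ [n-1] : f_t ≠ f_{t+1}}`. -/
def chgPts {n : ℕ} (f : Fin n → ℝ) : Finset ℕ :=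
  (Finset.univ.filter fun i : Fin (n - 1) =>
    f ⟨i.val, by have := i.isLt; omega⟩ ≠ f ⟨i.val + 1, by have := i.isLt; omega⟩).image
    fun i => i.val + 1

/-- The boundaries `0 = t₀ < t₁ < ⋯ < t_{s₀} < t_{s₀+1} = n` of the blocks of `f`. -/
def boundaries {n : ℕ} (f : Fin n → ℝ) : List ℕ :=
  0 :: ((chgPts f).sort (· ≤ ·) ++ [n])

/-- The block lengths `n_i^{(0)} = t_i - t_{i-1}`, `i ∈ [s₀+1]`. -/
def blockLengths {n : ℕ} (f : Fin n → ℝ) : List ℕ :=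
  List.zipWith (fun b a => b - a) (boundaries f).tail (boundaries f)

/-- The minimal length condition (Assumption 1): `max_i n_i^{(0)} ≤ c_max · min_i n_i^{(0)}`. -/
def MinimalLength {n : ℕ} (cmax : ℝ) (f : Fin n → ℝ) : Prop :=
  ∀ a ∈ blockLengths f, ∀ b ∈ blockLengths f, (a : ℝ) ≤ cmax * (b : ℝ)

/-- `r` is the `ℓ₂` operator (spectral) norm of the matrix `M`. -/
def IsOpNorm {n m : ℕ} (M : Matrix (Fin n) (Fin m) ℝ) (r : ℝ) : Prop :=
  0 ≤ r ∧ (∀ v, sqNorm (M.mulVec v) ≤ r ^ 2 * sqNorm v) ∧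
    ∀ s : ℝ, 0 ≤ s → (∀ v, sqNorm (M.mulVec v) ≤ s ^ 2 * sqNorm v) → r ≤ s

/-- The block of the coordinate `i` determined by the cut set `M ⊆ [n-1]`:
`j` is in the block of `i` iff no cut `t ∈ M` separates them. -/
def blockOf {n : ℕ} (M : Finset (Fin (n - 1))) (i : Fin n) : Finset (Fin n) :=
  Finset.univ.filter fun j => ∀ t ∈ M, (i.val ≤ t.val ↔ j.val ≤ t.val)

/-- The blockwise-averaging orthogonal projection `P^M`. -/
def blockProj {n : ℕ} (M : Finset (Fin (n - 1))) (v : Fin n → ℝ) : Fin n → ℝ :=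
  fun i => (∑ j ∈ blockOf M i, v j) / (blockOf M i).card

/-- The multisource alignment operator `P^{{n_k}_{k=0}^K, n₀}` (with `n₀ = nk 0`). -/
def alignPMulti (K : ℕ) (nk : Fin (K + 1) → ℕ) :
    Matrix (Fin (∑ k, nk k)) (Fin (nk 0)) ℝ :=
  Matrix.of fun i j =>
    if (∑ k, cdiv (j.val * nk k) (nk 0)) < i.val + 1 ∧
        i.val + 1 ≤ ∑ k, cdiv ((j.val + 1) * nk k) (nk 0) then 1 else 0

/-- The multisource averaging alignment operator `P̃^{n₀, {n_k}_{k=0}^K}` (with `n₀ = nk 0`). -/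
def alignPtMulti (K : ℕ) (nk : Fin (K + 1) → ℕ) :
    Matrix (Fin (nk 0)) (Fin (∑ k, nk k)) ℝ :=
  Matrix.of fun i j =>
    if (∑ k, cdiv (i.val * nk k) (nk 0)) < j.val + 1 ∧
        j.val + 1 ≤ ∑ k, cdiv ((i.val + 1) * nk k) (nk 0)
    then (((∑ k, cdiv ((i.val + 1) * nk k) (nk 0) : ℕ) : ℝ) -
          ((∑ k, cdiv (i.val * nk k) (nk 0) : ℕ) : ℝ))⁻¹ else 0

/-- `J̃_{j,k} = Σ_{k̃=0}^{k-1} ⌈j n_{k̃}/n₀⌉ + Σ_{k̃=k}^{K} ⌈(j-1) n_{k̃}/n₀⌉` (with `j` 1-based,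
`n₀ = nk 0`). -/
def Jt (K : ℕ) (nk : Fin (K + 1) → ℕ) (j k : ℕ) : ℕ :=
  ∑ t : Fin (K + 1),
    if t.val < k then cdiv (j * nk t) (nk 0) else cdiv ((j - 1) * nk t) (nk 0)

/-- The (1-based) positions `{⌈j n₁/n₀⌉ + j : j ∈ [n₀]}` occupied by the target data in the
interleaved vector. -/
def tpos (n₀ n₁ : ℕ) : Finset ℕ :=
  (Finset.range n₀).image fun j => cdiv ((j + 1) * n₁) n₀ + (j + 1)

/-- `mcount n₀ n₁ I = |{⌈j n₁/n₀⌉ + j : j ∈ [n₀]} ∩ [I]|`. -/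
def mcount (n₀ n₁ I : ℕ) : ℕ := ((tpos n₀ n₁).filter (· ≤ I)).card

/-- The interleaved data vector `ỹ ∈ ℝ^{n₁+n₀}`: `ỹ_I = y_j` if `I = ⌈j n₁/n₀⌉ + j` for some
`j ∈ [n₀]`, and otherwise `ỹ_I = y¹_{I - mcount n₀ n₁ I}`. -/
def interleave (n₀ n₁ : ℕ) (y : Fin n₀ → ℝ) (y1 : Fin n₁ → ℝ) : Fin (n₁ + n₀) → ℝ :=
  fun i =>
    if h : ∃ j : Fin n₀, i.val + 1 = cdiv ((j.val + 1) * n₁) n₀ + (j.val + 1) then y h.choose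
    else if h2 : i.val - mcount n₀ n₁ (i.val + 1) < n₁ then y1 ⟨_, h2⟩ else 0

end
lemma cdiv_facts (a b : ℕ) (hb : 0 < b) : a ≤ b * cdiv a b ∧ b * cdiv a b ≤ a + b - 1 := by
  have h1 := Nat.div_add_mod (a + b - 1) b
  have h2 := Nat.mod_lt (a + b - 1) hb
  unfold cdiv
  omega

lemma cdiv_mono (b : ℕ) {a a' : ℕ} (h : a ≤ a') : cdiv a b ≤ cdiv a' b :=
  Nat.div_le_div_right (by omega)

lemma cdiv_add_self (a b : ℕ) (hb : 0 < b) : cdiv (a + b) b = cdiv a b + 1 := by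
  unfold cdiv
  rw [show a + b + b - 1 = a + b - 1 + b by omega, Nat.add_div_right _ hb]

lemma cdiv_zero (b : ℕ) (hb : 0 < b) : cdiv 0 b = 0 := by
  unfold cdiv; exact Nat.div_eq_of_lt (by omega)

lemma cdiv_mul_self (n₀ n : ℕ) (h0 : 0 < n₀) : cdiv (n₀ * n) n₀ = n := by
  obtain ⟨b1, b2⟩ := cdiv_facts (n₀ * n) n₀ h0
  have h1 : n ≤ cdiv (n₀ * n) n₀ := Nat.le_of_mul_le_mul_left b1 h0
  have h2 : cdiv (n₀ * n) n₀ < n + 1 := by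
    apply Nat.lt_of_mul_lt_mul_left (a := n₀)
    rw [mul_add, mul_one]; omega
  omega

lemma key_aux (n₀ n a N1 N2 : ℕ) (h0 : 0 < n₀) (hle : n₀ ≤ n)
    (b1 : a ≤ n₀ * N1) (b2 : n₀ * N1 ≤ a + n₀ - 1)
    (b3 : a + n ≤ n₀ * N2) (b4 : n₀ * N2 ≤ a + n + n₀ - 1)
    (step : N1 + 1 ≤ N2) :
    n ≤ 2 * n₀ * (N2 - N1) ∧ n₀ * (N2 - N1) ≤ 2 * n := by
  have h1 : n₀ * (N2 - N1) = n₀ * N2 - n₀ * N1 := Nat.mul_sub _ _ _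
  have h2 : 2 * n₀ * (N2 - N1) = 2 * (n₀ * (N2 - N1)) := by ring
  have h3 : n₀ * N1 + n₀ ≤ n₀ * N2 := by
    have := Nat.mul_le_mul_left n₀ step
    rw [mul_add, mul_one] at this
    exact this
  rw [h2, h1]
  omega

lemma cdiv_key (n₀ n : ℕ) (h0 : 0 < n₀) (hle : n₀ ≤ n) (j : ℕ) :
    n ≤ 2 * n₀ * (cdiv ((j + 1) * n) n₀ - cdiv (j * n) n₀) ∧
      n₀ * (cdiv ((j + 1) * n) n₀ - cdiv (j * n) n₀) ≤ 2 * n := by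
  have e1 : (j + 1) * n = j * n + n := by ring
  obtain ⟨b1, b2⟩ := cdiv_facts (j * n) n₀ h0
  obtain ⟨b3, b4⟩ := cdiv_facts ((j + 1) * n) n₀ h0
  have step : cdiv (j * n) n₀ + 1 ≤ cdiv ((j + 1) * n) n₀ := by
    rw [← cdiv_add_self _ _ h0]
    exact cdiv_mono _ (by omega)
  exact key_aux n₀ n (j * n) _ _ h0 hle b1 b2 (by omega) (by omega) step

lemma cdiv_le_of_fin (n₀ nkk : ℕ) (hn₀ : 0 < n₀) (j : Fin n₀) :
    cdiv ((j.val + 1) * nkk) n₀ ≤ nkk := by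
  have h := cdiv_mono n₀ (Nat.mul_le_mul_right nkk (show j.val + 1 ≤ n₀ from j.isLt))
  rwa [cdiv_mul_self _ _ hn₀] at h

/-- **Eigenvalue bounds for `(P^{n_k,n₀})ᵀ P^{n_k,n₀}`** when `n_k ≥ n₀`:
`(n_k/(2n₀))‖v‖₂² ≤ ‖P^{n_k,n₀} v‖₂² ≤ (2n_k/n₀)‖v‖₂²`. -/
theorem alignP_quadratic_bounds (n₀ nkk : ℕ) (hn₀ : 0 < n₀) (hle : n₀ ≤ nkk)
    (v : Fin n₀ → ℝ) :
    (nkk : ℝ) / (2 * n₀) * sqNorm v ≤ sqNorm ((alignP nkk n₀).mulVec v) ∧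
      sqNorm ((alignP nkk n₀).mulVec v) ≤ 2 * (nkk : ℝ) / n₀ * sqNorm v := by
  have hnkk : 0 < nkk := lt_of_lt_of_le hn₀ hle
  -- uniqueness of the column covering a given row
  have huniq : ∀ (i : Fin nkk) (j j' : Fin n₀),
      (cdiv (j.val * nkk) n₀ < i.val + 1 ∧ i.val + 1 ≤ cdiv ((j.val + 1) * nkk) n₀) →
      (cdiv (j'.val * nkk) n₀ < i.val + 1 ∧ i.val + 1 ≤ cdiv ((j'.val + 1) * nkk) n₀) →
      j = j' := by
    intro i j j' ⟨h1, h2⟩ ⟨h3, h4⟩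
    by_contra hne
    rcases lt_or_gt_of_ne (fun h : j.val = j'.val => hne (Fin.ext h)) with h | h
    · have : cdiv ((j.val + 1) * nkk) n₀ ≤ cdiv (j'.val * nkk) n₀ :=
        cdiv_mono _ (Nat.mul_le_mul_right _ (by omega))
      omega
    · have : cdiv ((j'.val + 1) * nkk) n₀ ≤ cdiv (j.val * nkk) n₀ :=
        cdiv_mono _ (Nat.mul_le_mul_right _ (by omega))
      omega
  -- existence of a covering column
  have hex : ∀ i : Fin nkk, ∃ j : Fin n₀,
      cdiv (j.val * nkk) n₀ < i.val + 1 ∧ i.val + 1 ≤ cdiv ((j.val + 1) * nkk) n₀ := by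
    intro i
    set S : Finset (Fin n₀) :=
      Finset.univ.filter fun j : Fin n₀ => cdiv (j.val * nkk) n₀ ≤ i.val with hS
    have h0mem : (⟨0, hn₀⟩ : Fin n₀) ∈ S := by
      simp only [hS, Finset.mem_filter, Finset.mem_univ, true_and]
      simp [cdiv_zero n₀ hn₀]
    have hSne : S.Nonempty := ⟨_, h0mem⟩
    have hj₀mem := S.max'_mem hSne
    set j₀ := S.max' hSne with hj₀
    have hj₀le : cdiv (j₀.val * nkk) n₀ ≤ i.val := by
      rw [hS] at hj₀mem
      simpa using hj₀mem
    refine ⟨j₀, by omega, ?_⟩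
    by_cases hcase : j₀.val + 1 < n₀
    · by_contra hcon
      push_neg at hcon
      have hmem : (⟨j₀.val + 1, hcase⟩ : Fin n₀) ∈ S := by
        simp only [hS, Finset.mem_filter, Finset.mem_univ, true_and]
        omega
      have hle' := S.le_max' _ hmem
      rw [← hj₀] at hle'
      have : j₀.val + 1 ≤ j₀.val := hle'
      omega
    · have hj1 : j₀.val + 1 = n₀ := by have := j₀.isLt; omega
      have heq : cdiv ((j₀.val + 1) * nkk) n₀ = nkk := by
        rw [hj1]; exact cdiv_mul_self _ _ hn₀
      rw [heq]
      exact i.isLt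
  -- pointwise: square of row of Pv equals indicator-weighted squares
  have hsq : ∀ i : Fin nkk,
      ((alignP nkk n₀).mulVec v i) ^ 2 = ∑ j, (alignP nkk n₀) i j * (v j) ^ 2 := by
    intro i
    obtain ⟨j₀, hj₀⟩ := hex i
    have h1 : (alignP nkk n₀).mulVec v i = v j₀ := by
      rw [Matrix.mulVec, dotProduct]
      rw [Finset.sum_eq_single j₀]
      · rw [alignP, Matrix.of_apply, if_pos hj₀, one_mul]
      · intro j _ hne
        have hnc : ¬(cdiv (j.val * nkk) n₀ < i.val + 1 ∧
            i.val + 1 ≤ cdiv ((j.val + 1) * nkk) n₀) :=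
          fun h => hne (huniq i j j₀ h hj₀)
        rw [alignP, Matrix.of_apply, if_neg hnc, zero_mul]
      · simp
    have h2 : ∑ j, (alignP nkk n₀) i j * (v j) ^ 2 = (v j₀) ^ 2 := by
      rw [Finset.sum_eq_single j₀]
      · rw [alignP, Matrix.of_apply, if_pos hj₀, one_mul]
      · intro j _ hne
        have hnc : ¬(cdiv (j.val * nkk) n₀ < i.val + 1 ∧
            i.val + 1 ≤ cdiv ((j.val + 1) * nkk) n₀) :=
          fun h => hne (huniq i j j₀ h hj₀)
        rw [alignP, Matrix.of_apply, if_neg hnc, zero_mul]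
      · simp
    rw [h1, h2]
  -- column sums
  have hcount : ∀ j : Fin n₀, ∑ i : Fin nkk, (alignP nkk n₀) i j
      = ((cdiv ((j.val + 1) * nkk) n₀ - cdiv (j.val * nkk) n₀ : ℕ) : ℝ) := by
    intro j
    have hN2 := cdiv_le_of_fin n₀ nkk hn₀ j
    have hrange : ∑ i : Fin nkk, (alignP nkk n₀) i j =
        ∑ i ∈ Finset.range nkk, (if cdiv (j.val * nkk) n₀ < i + 1 ∧
          i + 1 ≤ cdiv ((j.val + 1) * nkk) n₀ then (1 : ℝ) else 0) := by
      rw [← Fin.sum_univ_eq_sum_range (fun i => if cdiv (j.val * nkk) n₀ < i + 1 ∧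
          i + 1 ≤ cdiv ((j.val + 1) * nkk) n₀ then (1 : ℝ) else 0) nkk]
      rfl
    rw [hrange, Finset.sum_boole]
    congr 1
    have hfilter : (Finset.range nkk).filter (fun i => cdiv (j.val * nkk) n₀ < i + 1 ∧
        i + 1 ≤ cdiv ((j.val + 1) * nkk) n₀) =
        Finset.Ico (cdiv (j.val * nkk) n₀) (cdiv ((j.val + 1) * nkk) n₀) := by
      ext k
      simp only [Finset.mem_filter, Finset.mem_range, Finset.mem_Ico]
      omega
    rw [hfilter, Nat.card_Ico]
  -- the main identity
  have hmain : sqNorm ((alignP nkk n₀).mulVec v)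
      = ∑ j : Fin n₀,
        ((cdiv ((j.val + 1) * nkk) n₀ - cdiv (j.val * nkk) n₀ : ℕ) : ℝ) * (v j) ^ 2 := by
    unfold sqNorm
    rw [Finset.sum_congr rfl (fun i _ => hsq i), Finset.sum_comm]
    refine Finset.sum_congr rfl fun j _ => ?_
    rw [← Finset.sum_mul, hcount j]
  constructor
  · rw [hmain]
    unfold sqNorm
    rw [Finset.mul_sum]
    apply Finset.sum_le_sum
    intro j _
    have hk := (cdiv_key n₀ nkk hn₀ hle j.val).1
    have hcast : (nkk : ℝ) ≤ 2 * n₀ *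
        ((cdiv ((j.val + 1) * nkk) n₀ - cdiv (j.val * nkk) n₀ : ℕ) : ℝ) := by
      exact_mod_cast hk
    have hcoef : (nkk : ℝ) / (2 * n₀) ≤
        ((cdiv ((j.val + 1) * nkk) n₀ - cdiv (j.val * nkk) n₀ : ℕ) : ℝ) := by
      rw [div_le_iff₀ (by positivity)]
      linarith
    exact mul_le_mul_of_nonneg_right hcoef (sq_nonneg _)
  · rw [hmain]
    unfold sqNorm
    rw [Finset.mul_sum]
    apply Finset.sum_le_sum
    intro j _
    have hk := (cdiv_key n₀ nkk hn₀ hle j.val).2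
    have hcast : (n₀ : ℝ) *
        ((cdiv ((j.val + 1) * nkk) n₀ - cdiv (j.val * nkk) n₀ : ℕ) : ℝ) ≤ 2 * nkk := by
      exact_mod_cast hk
    have hcoef : ((cdiv ((j.val + 1) * nkk) n₀ - cdiv (j.val * nkk) n₀ : ℕ) : ℝ) ≤
        2 * (nkk : ℝ) / n₀ := by
      rw [le_div_iff₀ (by positivity)]
      linarith
    exact mul_le_mul_of_nonneg_right hcoef (sq_nonneg _)
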